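/- Let X be a finite n-dimensional simplicial complex satisfying condition (1_X), let 1 ≤ i ≤ n−1, and let λ ∈ ℝ be such that (Δ_u g, g)_u ≤ λ·(g, g)_u for every vertex u of X and every g ∈ C^{i−1}(Lk(u)). Then for every f ∈ C^i(X) and every vertex v of X, (Δρ_v f, ρ_v f) ≤ λ·(ρ_v f, f). -/

import Mathlib

open Finset

open scoped Classical

variable {V : Type*}

/-- A (finite) simplicial complex on the vertex type `V`: a collection of nonempty
finite sets of vertices (the simplices) closed under passing to nonempty subsets. -/
def IsComplex [DecidableEq V] (K : Finset (Finset V)) : Prop :=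
  (∀ s ∈ K, s.Nonempty) ∧ ∀ s ∈ K, ∀ t : Finset V, t ⊆ s → t.Nonempty → t ∈ K

/-- `K` is `n`-dimensional and satisfies condition `(1_X)`: every simplex has dimension
at most `n` and is a face of some `n`-dimensional simplex (one of cardinality `n+1`). -/
def IsPureDim [DecidableEq V] (K : Finset (Finset V)) (n : ℕ) : Prop :=
  (∀ s ∈ K, s.card ≤ n + 1) ∧ ∀ s ∈ K, ∃ t ∈ K, s ⊆ t ∧ t.card = n + 1

/-- `wt K n s` : the number `w(s)` of `n`-dimensional simplices of `K` containing `s`. -/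
noncomputable def wt [DecidableEq V] (K : Finset (Finset V)) (n : ℕ) (s : Finset V) : ℕ :=
  (K.filter fun t => s ⊆ t ∧ t.card = n + 1).card

/-- An `m`-tuple of vertices is allowed when its entries are distinct and form a simplex
of `K`; i.e. it is an oriented `(m-1)`-simplex of `K`. -/
def Allowed [DecidableEq V] [Fintype V] (K : Finset (Finset V)) {m : ℕ}
    (v : Fin m → V) : Prop :=
  Function.Injective v ∧ Finset.image v Finset.univ ∈ K

/-- `f` is an `(m-1)`-cochain on `K`: a real-valued alternating function on oriented
`(m-1)`-simplices of `K` (realized as a function on all `m`-tuples of vertices which is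
alternating and vanishes on tuples which are not oriented simplices of `K`). -/
def IsCochain [DecidableEq V] [Fintype V] (K : Finset (Finset V)) (m : ℕ)
    (f : (Fin m → V) → ℝ) : Prop :=
  (∀ (σ : Equiv.Perm (Fin m)) (v : Fin m → V),
      f (v ∘ σ) = ((Equiv.Perm.sign σ : ℤ) : ℝ) * f v) ∧
  ∀ v : Fin m → V, ¬ Allowed K v → f v = 0

/-- The inner product `(f,g) = ∑_s w(s)·f(s)·g(s)` on `(m-1)`-cochains, the sum being over
the unoriented `(m-1)`-simplices `s` of `K` (each with an arbitrarily chosen orientation);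
summing over all `m`-tuples counts each simplex `m!` times, whence the normalization. -/
noncomputable def innerC [DecidableEq V] [Fintype V] (K : Finset (Finset V)) (n m : ℕ)
    (f g : (Fin m → V) → ℝ) : ℝ :=
  (∑ v : Fin m → V, (wt K n (Finset.image v Finset.univ) : ℝ) * f v * g v) /
    (Nat.factorial m : ℝ)

/-- The coboundary `d : C^{m-1}(K) → C^m(K)`. -/
noncomputable def cobound [DecidableEq V] [Fintype V] (K : Finset (Finset V)) {m : ℕ}
    (f : (Fin m → V) → ℝ) : (Fin (m + 1) → V) → ℝ :=
  fun v => if Allowed K v then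
    ∑ j : Fin (m + 1), (-1 : ℝ) ^ (j : ℕ) * f (v ∘ Fin.succAbove j)
  else 0

/-- The operator `δ : C^m(K) → C^{m-1}(K)`,
`(δf)(s) = ∑_x (w([x,s])/w(s))·f([x,s])`, the sum being over the vertices `x`
such that `[x,s]` is an oriented simplex of `K`. -/
noncomputable def codiff [DecidableEq V] [Fintype V] (K : Finset (Finset V)) (n : ℕ) {m : ℕ}
    (f : (Fin (m + 1) → V) → ℝ) : (Fin m → V) → ℝ :=
  fun s => ∑ x : V,
    if Allowed K (Fin.cons x s) then
      ((wt K n (Finset.image (Fin.cons x s) Finset.univ) : ℝ) /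
          (wt K n (Finset.image s Finset.univ) : ℝ)) * f (Fin.cons x s)
    else 0

/-- The Laplace operator `Δ = δ ∘ d` on `(m-1)`-cochains. -/
noncomputable def lap [DecidableEq V] [Fintype V] (K : Finset (Finset V)) (n : ℕ) {m : ℕ}
    (f : (Fin m → V) → ℝ) : (Fin m → V) → ℝ :=
  codiff K n (cobound K f)

/-- `ρ_v : C^{m-1}(K) → C^{m-1}(K)`: `(ρ_v f)(s) = f(s)` if `v` is a vertex of `s`,
and `0` otherwise. -/
noncomputable def rho [DecidableEq V] {m : ℕ} (v : V) (f : (Fin m → V) → ℝ) :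
    (Fin m → V) → ℝ :=
  fun s => if ∃ j, s j = v then f s else 0

/-- The vertices of `K`. -/
noncomputable def verts [DecidableEq V] [Fintype V] (K : Finset (Finset V)) : Finset V :=
  Finset.univ.filter fun v => {v} ∈ K

/-- The link `Lk(v)` of a vertex `v`: all simplices `s` of `K` with `v ∉ s` and
`s ∪ {v} ∈ K`. -/
noncomputable def linkK [DecidableEq V] (K : Finset (Finset V)) (v : V) :
    Finset (Finset V) :=
  K.filter fun s => v ∉ s ∧ insert v s ∈ K

/-- `τ_v : C^{m}(K) → C^{m-1}(Lk(v))`: `(τ_v f)(s) = f([v,s])` for `s` an oriented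
simplex of the link `Lk(v)`. -/
noncomputable def tau [DecidableEq V] [Fintype V] (K : Finset (Finset V)) (v : V) {m : ℕ}
    (f : (Fin (m + 1) → V) → ℝ) : (Fin m → V) → ℝ :=
  fun s => if Allowed (linkK K v) s then f (Fin.cons v s) else 0

/-- `c` is an eigenvalue of the Laplace operator acting on `(m-1)`-cochains of `K`. -/
def IsEigen [DecidableEq V] [Fintype V] (K : Finset (Finset V)) (n m : ℕ) (c : ℝ) : Prop :=
  ∃ f : (Fin m → V) → ℝ, f ≠ 0 ∧ IsCochain K m f ∧ lap K n f = c • f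

set_option linter.unusedSectionVars false
set_option maxHeartbeats 1000000

section Aux
variable [DecidableEq V] [Fintype V]

lemma image_comp_perm {m : ℕ} (σ : Equiv.Perm (Fin m)) (t : Fin m → V) :
    Finset.image (t ∘ ⇑σ) Finset.univ = Finset.image t Finset.univ := by
  rw [← Finset.image_image, Finset.image_univ_equiv]

lemma image_cons {m : ℕ} (x : V) (s : Fin m → V) :
    Finset.image (Fin.cons x s) Finset.univ = insert x (Finset.image s Finset.univ) := by
  classical
  ext a
  simp only [Finset.mem_image, Finset.mem_insert, Finset.mem_univ, true_and]
  constructor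
  · rintro ⟨k, rfl⟩
    rcases Fin.eq_zero_or_eq_succ k with rfl | ⟨j, rfl⟩
    · left; simp
    · right; exact ⟨j, by simp⟩
  · rintro (rfl | ⟨j, rfl⟩)
    · exact ⟨0, by simp⟩
    · exact ⟨j.succ, by simp⟩

lemma cons_comp_ext {m : ℕ} (x : V) (s : Fin m → V) (σ : Equiv.Perm (Fin m)) :
    Fin.cons x s ∘ ⇑(Equiv.Perm.decomposeFin.symm (0, σ)) = Fin.cons x (s ∘ ⇑σ) := by
  funext k
  rcases Fin.eq_zero_or_eq_succ k with rfl | ⟨j, rfl⟩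
  · simp [Equiv.Perm.decomposeFin_symm_apply_zero]
  · simp [Equiv.Perm.decomposeFin_symm_apply_succ]

lemma sign_decompose_zero {m : ℕ} (σ : Equiv.Perm (Fin m)) :
    Equiv.Perm.sign (Equiv.Perm.decomposeFin.symm (0, σ)) = Equiv.Perm.sign σ := by
  rw [Equiv.Perm.decomposeFin.symm_sign]; simp

lemma cons_cons_swap {m : ℕ} (a b : V) (s : Fin m → V) :
    Fin.cons a (Fin.cons b s) =
      (Fin.cons b (Fin.cons a s)) ∘ ⇑(Equiv.swap (0 : Fin (m + 2)) 1) := by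
  funext k
  rcases Fin.eq_zero_or_eq_succ k with rfl | ⟨j, rfl⟩
  · simp [Equiv.swap_apply_left]
  rcases Fin.eq_zero_or_eq_succ j with rfl | ⟨j', rfl⟩
  · have : ((0 : Fin (m+1)).succ) = (1 : Fin (m+2)) := by simp [Fin.succ_zero_eq_one]
    rw [this]
    simp [Equiv.swap_apply_right]
  · have h1 : (j'.succ.succ : Fin (m + 2)) ≠ 0 := Fin.succ_ne_zero _
    have h2 : (j'.succ.succ : Fin (m + 2)) ≠ 1 := by
      rw [← Fin.succ_zero_eq_one]
      intro h
      exact Fin.succ_ne_zero j' (Fin.succ_injective _ h)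
    simp [Equiv.swap_apply_of_ne_of_ne h1 h2]

noncomputable def psi {m : ℕ} (p : Fin (m + 1) × Equiv.Perm (Fin m)) :
    Equiv.Perm (Fin (m + 1)) :=
  (p.1.cycleRange)⁻¹ * Equiv.Perm.decomposeFin.symm (0, p.2)

lemma psi_zero {m : ℕ} (j : Fin (m + 1)) (τ : Equiv.Perm (Fin m)) :
    psi (j, τ) 0 = j := by
  simp [psi, Equiv.Perm.decomposeFin_symm_apply_zero, Equiv.Perm.mul_apply,
    Equiv.Perm.inv_def, Fin.cycleRange_symm_zero]

lemma psi_succ {m : ℕ} (j : Fin (m + 1)) (τ : Equiv.Perm (Fin m)) (k : Fin m) :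
    psi (j, τ) k.succ = j.succAbove (τ k) := by
  simp [psi, Equiv.Perm.decomposeFin_symm_apply_succ, Equiv.Perm.mul_apply,
    Equiv.Perm.inv_def, Fin.cycleRange_symm_succ]

lemma psi_sign {m : ℕ} (j : Fin (m + 1)) (τ : Equiv.Perm (Fin m)) :
    Equiv.Perm.sign (psi (j, τ)) = (-1) ^ (j : ℕ) * Equiv.Perm.sign τ := by
  rw [psi, map_mul, Equiv.Perm.decomposeFin.symm_sign, map_inv, Fin.sign_cycleRange]
  simp

lemma psi_bijective {m : ℕ} : Function.Bijective (psi (m := m)) := by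
  rw [Fintype.bijective_iff_injective_and_card]
  constructor
  · rintro ⟨j, τ⟩ ⟨j', τ'⟩ h
    have hj : j = j' := by rw [← psi_zero j τ, ← psi_zero j' τ', h]
    subst hj
    have hτ : τ = τ' := by
      apply Equiv.ext; intro k
      have := congrArg (fun π : Equiv.Perm (Fin (m+1)) => π k.succ) h
      simp only [psi_succ] at this
      exact j.succAbove_right_injective this
    rw [hτ]
  · simp [Fintype.card_perm, Nat.factorial_succ]

/-- The symmetrized coboundary sum. -/
noncomputable def Esum {m : ℕ} (h : (Fin m → V) → ℝ) (u : Fin (m + 1) → V) : ℝ :=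
  ∑ π : Equiv.Perm (Fin (m + 1)),
    ((Equiv.Perm.sign π : ℤ) : ℝ) * h (u ∘ ⇑π ∘ Fin.succ)

lemma Esum_eq {m : ℕ} (h : (Fin m → V) → ℝ)
    (halt : ∀ (σ : Equiv.Perm (Fin m)) (w : Fin m → V),
      h (w ∘ ⇑σ) = ((Equiv.Perm.sign σ : ℤ) : ℝ) * h w)
    (u : Fin (m + 1) → V) :
    Esum h u = (Nat.factorial m : ℝ) *
      ∑ j : Fin (m + 1), (-1 : ℝ) ^ (j : ℕ) * h (u ∘ Fin.succAbove j) := by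
  rw [Esum, ← Fintype.sum_bijective (psi (m := m)) psi_bijective
    _ (fun π => ((Equiv.Perm.sign π : ℤ) : ℝ) * h (u ∘ ⇑π ∘ Fin.succ)) (fun _ => rfl)]
  rw [Fintype.sum_prod_type]
  rw [Finset.mul_sum]
  refine Finset.sum_congr rfl fun j _ => ?_
  have hcomp : ∀ τ : Equiv.Perm (Fin m), u ∘ ⇑(psi (j, τ)) ∘ Fin.succ
      = (u ∘ j.succAbove) ∘ ⇑τ := by
    intro τ; funext k; simp [psi_succ, Function.comp]
  have : ∀ τ : Equiv.Perm (Fin m),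
      ((Equiv.Perm.sign (psi (j, τ)) : ℤ) : ℝ) * h (u ∘ ⇑(psi (j, τ)) ∘ Fin.succ)
      = (-1 : ℝ) ^ (j : ℕ) * h (u ∘ j.succAbove) := by
    intro τ
    rw [hcomp, halt τ, psi_sign]
    push_cast
    rcases Int.units_eq_one_or (Equiv.Perm.sign τ) with h | h <;> simp [h]
  rw [Finset.sum_congr rfl fun τ _ => this τ]
  rw [Finset.sum_const]
  simp [Fintype.card_perm, mul_comm]

lemma Esum_comp_perm {m : ℕ} (h : (Fin m → V) → ℝ) (σ : Equiv.Perm (Fin (m + 1)))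
    (u : Fin (m + 1) → V) :
    Esum h (u ∘ ⇑σ) = ((Equiv.Perm.sign σ : ℤ) : ℝ) * Esum h u := by
  have hmul : ∀ π : Equiv.Perm (Fin (m + 1)), (u ∘ ⇑σ) ∘ ⇑π = u ∘ ⇑(σ * π) := by
    intro π; funext k; simp [Equiv.Perm.mul_apply, Function.comp]
  have key : ∑ π : Equiv.Perm (Fin (m + 1)),
      ((Equiv.Perm.sign (σ * π) : ℤ) : ℝ) * h (u ∘ ⇑(σ * π) ∘ Fin.succ) = Esum h u := by
    exact Equiv.sum_comp (Equiv.mulLeft σ)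
      (fun ρ => ((Equiv.Perm.sign ρ : ℤ) : ℝ) * h (u ∘ ⇑ρ ∘ Fin.succ))
  rw [Esum]
  have : ∀ π : Equiv.Perm (Fin (m + 1)),
      ((Equiv.Perm.sign π : ℤ) : ℝ) * h ((u ∘ ⇑σ) ∘ ⇑π ∘ Fin.succ)
      = ((Equiv.Perm.sign σ : ℤ) : ℝ) *
        (((Equiv.Perm.sign (σ * π) : ℤ) : ℝ) * h (u ∘ ⇑(σ * π) ∘ Fin.succ)) := by
    intro π
    have h1 : (u ∘ ⇑σ) ∘ ⇑π ∘ Fin.succ = u ∘ ⇑(σ * π) ∘ Fin.succ := by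
      rw [← Function.comp_assoc, hmul π, Function.comp_assoc]
    rw [h1, Equiv.Perm.sign_mul]
    push_cast
    rcases Int.units_eq_one_or (Equiv.Perm.sign σ) with hs | hs <;> simp [hs] <;> ring
  rw [Finset.sum_congr rfl fun π _ => this π, ← Finset.mul_sum, key]

lemma alt_sum_comp {m : ℕ} (h : (Fin m → V) → ℝ)
    (halt : ∀ (σ : Equiv.Perm (Fin m)) (w : Fin m → V),
      h (w ∘ ⇑σ) = ((Equiv.Perm.sign σ : ℤ) : ℝ) * h w)
    (σ : Equiv.Perm (Fin (m + 1))) (u : Fin (m + 1) → V) :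
    ∑ j : Fin (m + 1), (-1 : ℝ) ^ (j : ℕ) * h ((u ∘ ⇑σ) ∘ Fin.succAbove j)
      = ((Equiv.Perm.sign σ : ℤ) : ℝ) *
        ∑ j : Fin (m + 1), (-1 : ℝ) ^ (j : ℕ) * h (u ∘ Fin.succAbove j) := by
  have h1 := Esum_eq h halt (u ∘ ⇑σ)
  have h2 := Esum_eq h halt u
  have h3 := Esum_comp_perm h σ u
  have hfac : (Nat.factorial m : ℝ) ≠ 0 := Nat.cast_ne_zero.2 (Nat.factorial_ne_zero m)
  apply mul_left_cancel₀ hfac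
  rw [← h1, h3, h2]
  ring

end Aux
section Aux2
variable [DecidableEq V] [Fintype V] {K : Finset (Finset V)}

lemma allowed_comp_perm {m : ℕ} (σ : Equiv.Perm (Fin m)) (t : Fin m → V) :
    Allowed K (t ∘ ⇑σ) ↔ Allowed K t := by
  unfold Allowed
  rw [image_comp_perm]
  exact and_congr_left fun _ => Equiv.injective_comp σ t

lemma cobound_alt {m : ℕ} (h : (Fin m → V) → ℝ)
    (halt : ∀ (σ : Equiv.Perm (Fin m)) (w : Fin m → V),
      h (w ∘ ⇑σ) = ((Equiv.Perm.sign σ : ℤ) : ℝ) * h w)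
    (σ : Equiv.Perm (Fin (m + 1))) (u : Fin (m + 1) → V) :
    cobound K h (u ∘ ⇑σ) = ((Equiv.Perm.sign σ : ℤ) : ℝ) * cobound K h u := by
  unfold cobound
  by_cases hA : Allowed K u
  · rw [if_pos ((allowed_comp_perm σ u).2 hA), if_pos hA]
    exact alt_sum_comp h halt σ u
  · rw [if_neg (fun hc => hA ((allowed_comp_perm σ u).1 hc)), if_neg hA, mul_zero]

lemma codiff_alt {n m : ℕ} (F : (Fin (m + 1) → V) → ℝ)
    (halt : ∀ (σ : Equiv.Perm (Fin (m + 1))) (u : Fin (m + 1) → V),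
      F (u ∘ ⇑σ) = ((Equiv.Perm.sign σ : ℤ) : ℝ) * F u)
    (σ : Equiv.Perm (Fin m)) (s : Fin m → V) :
    codiff K n F (s ∘ ⇑σ) = ((Equiv.Perm.sign σ : ℤ) : ℝ) * codiff K n F s := by
  unfold codiff
  rw [Finset.mul_sum]
  refine Finset.sum_congr rfl fun x _ => ?_
  have hc : Fin.cons x (s ∘ ⇑σ) = Fin.cons x s ∘ ⇑(Equiv.Perm.decomposeFin.symm (0, σ)) :=
    (cons_comp_ext x s σ).symm
  rw [hc, allowed_comp_perm, image_comp_perm, image_comp_perm, halt, sign_decompose_zero]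
  split_ifs with hA
  · ring
  · rw [mul_zero]

lemma lap_alt {n m : ℕ} (h : (Fin (m + 1) → V) → ℝ)
    (halt : ∀ (σ : Equiv.Perm (Fin (m + 1))) (w : Fin (m + 1) → V),
      h (w ∘ ⇑σ) = ((Equiv.Perm.sign σ : ℤ) : ℝ) * h w)
    (σ : Equiv.Perm (Fin (m + 1))) (s : Fin (m + 1) → V) :
    lap K n h (s ∘ ⇑σ) = ((Equiv.Perm.sign σ : ℤ) : ℝ) * lap K n h s := by
  unfold lap
  exact codiff_alt (cobound K h) (fun τ u => cobound_alt h halt τ u) σ s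

lemma rho_alt {m : ℕ} (v : V) (h : (Fin m → V) → ℝ)
    (halt : ∀ (σ : Equiv.Perm (Fin m)) (w : Fin m → V),
      h (w ∘ ⇑σ) = ((Equiv.Perm.sign σ : ℤ) : ℝ) * h w)
    (σ : Equiv.Perm (Fin m)) (t : Fin m → V) :
    rho v h (t ∘ ⇑σ) = ((Equiv.Perm.sign σ : ℤ) : ℝ) * rho v h t := by
  unfold rho
  have hiff : (∃ j, (t ∘ ⇑σ) j = v) ↔ (∃ j, t j = v) :=
    ⟨fun ⟨j, hj⟩ => ⟨σ j, hj⟩, fun ⟨j, hj⟩ => ⟨σ.symm j, by simpa using hj⟩⟩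
  rw [if_congr hiff rfl rfl]
  split_ifs with hE
  · exact halt σ t
  · rw [mul_zero]

lemma allowed_cons_link (hcplx : IsComplex K) (v : V) {m : ℕ} (w : Fin (m + 1) → V) :
    Allowed K (Fin.cons v w) ↔ Allowed (linkK K v) w := by
  unfold Allowed
  rw [image_cons]
  constructor
  · rintro ⟨hinj, himg⟩
    rw [Fin.cons_injective_iff] at hinj
    obtain ⟨hvr, hwi⟩ := hinj
    refine ⟨hwi, ?_⟩
    have hne : (Finset.image w Finset.univ).Nonempty :=
      ⟨w 0, Finset.mem_image_of_mem _ (Finset.mem_univ 0)⟩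
    have hwK : Finset.image w Finset.univ ∈ K :=
      hcplx.2 _ himg _ (Finset.subset_insert _ _) hne
    have hvim : v ∉ Finset.image w Finset.univ := by
      intro hc
      obtain ⟨k, _, hk⟩ := Finset.mem_image.1 hc
      exact hvr ⟨k, hk⟩
    unfold linkK
    rw [Finset.mem_filter]
    exact ⟨hwK, hvim, himg⟩
  · rintro ⟨hwi, himg⟩
    unfold linkK at himg
    rw [Finset.mem_filter] at himg
    obtain ⟨hK, hvim, hins⟩ := himg
    refine ⟨?_, hins⟩
    rw [Fin.cons_injective_iff]
    refine ⟨?_, hwi⟩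
    rintro ⟨k, hk⟩
    exact hvim (by rw [← hk]; exact Finset.mem_image_of_mem _ (Finset.mem_univ k))

lemma wt_link (hcplx : IsComplex K) (v : V) {n' : ℕ} {A : Finset V}
    (hA : A ∈ linkK K v) :
    wt K (n' + 1) (insert v A) = wt (linkK K v) n' A := by
  unfold linkK at hA
  rw [Finset.mem_filter] at hA
  obtain ⟨hAK, hvA, hins⟩ := hA
  unfold wt
  refine Finset.card_bij' (fun t _ => t.erase v) (fun u _ => insert v u) ?_ ?_ ?_ ?_
  · intro t ht
    rw [Finset.mem_filter] at ht
    obtain ⟨htK, hsub, hcard⟩ := ht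
    have hvt : v ∈ t := hsub (Finset.mem_insert_self v A)
    have hce : (t.erase v).card = n' + 1 := by
      rw [Finset.card_erase_of_mem hvt, hcard]
      omega
    have hne : (t.erase v).Nonempty := Finset.card_pos.1 (by omega)
    have herK : t.erase v ∈ K := hcplx.2 t htK _ (Finset.erase_subset _ _) hne
    rw [Finset.mem_filter]
    refine ⟨?_, ?_, hce⟩
    · unfold linkK
      rw [Finset.mem_filter]
      refine ⟨herK, Finset.notMem_erase _ _, ?_⟩
      rw [Finset.insert_erase hvt]
      exact htK
    · intro a ha
      refine Finset.mem_erase.2 ⟨fun h => hvA (h ▸ ha), hsub (Finset.mem_insert_of_mem ha)⟩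
  · intro u hu
    rw [Finset.mem_filter] at hu
    obtain ⟨huL, hAu, hcard⟩ := hu
    unfold linkK at huL
    rw [Finset.mem_filter] at huL
    obtain ⟨huK, hvu, hinsu⟩ := huL
    rw [Finset.mem_filter]
    refine ⟨hinsu, Finset.insert_subset_insert _ hAu, ?_⟩
    rw [Finset.card_insert_of_notMem hvu, hcard]
  · intro t ht
    simp only [Finset.mem_filter] at ht
    exact Finset.insert_erase (ht.2.1 (Finset.mem_insert_self v A))
  · intro u hu
    simp only [linkK, Finset.mem_filter] at hu
    exact Finset.erase_insert hu.1.2.1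

lemma count_sum {m : ℕ} (v : V) (F : (Fin (m + 1) → V) → ℝ)
    (h0 : ∀ t, ¬(∃ j, t j = v) → F t = 0)
    (h1 : ∀ t, ¬Function.Injective t → F t = 0)
    (h2 : ∀ (σ : Equiv.Perm (Fin (m + 1))) (t : Fin (m + 1) → V), F (t ∘ ⇑σ) = F t) :
    ∑ t : Fin (m + 1) → V, F t = (m + 1 : ℝ) * ∑ s : Fin m → V, F (Fin.cons v s) := by
  have key : ∀ (j : Fin (m + 1)) (s : Fin m → V), F (j.insertNth v s) = F (Fin.cons v s) := by
    intro j s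
    have hc : Fin.cons v s = j.insertNth v s ∘ ⇑((j.cycleRange)⁻¹) := by
      funext k
      rcases Fin.eq_zero_or_eq_succ k with rfl | ⟨k', rfl⟩
      · simp [Equiv.Perm.inv_def, Fin.cycleRange_symm_zero, Fin.insertNth_apply_same]
      · simp [Equiv.Perm.inv_def, Fin.cycleRange_symm_succ, Fin.insertNth_apply_succAbove]
    rw [← h2 ((j.cycleRange)⁻¹) (j.insertNth v s), ← hc]
  have step1 : ∀ t : Fin (m + 1) → V, F t = ∑ j : Fin (m + 1), if t j = v then F t else 0 := by
    intro t
    by_cases hF : F t = 0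
    · simp [hF]
    · have hinj : Function.Injective t := by
        by_contra hc; exact hF (h1 t hc)
      have hex : ∃ j, t j = v := by
        by_contra hc; exact hF (h0 t hc)
      obtain ⟨j0, hj0⟩ := hex
      have hiff : ∀ j : Fin (m + 1), (t j = v) ↔ (j = j0) :=
        fun j => ⟨fun h => hinj (h.trans hj0.symm), fun h => h ▸ hj0⟩
      rw [Finset.sum_congr rfl fun j _ => if_congr (hiff j) rfl rfl,
        Finset.sum_ite_eq' Finset.univ j0 (fun _ => F t), if_pos (Finset.mem_univ j0)]
  have step3 : ∀ j : Fin (m + 1),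
      (∑ t : Fin (m + 1) → V, if t j = v then F t else 0) = ∑ s : Fin m → V, F (Fin.cons v s) := by
    intro j
    rw [← Equiv.sum_comp (Fin.insertNthEquiv (fun _ => V) j)
      (fun t => if t j = v then F t else 0)]
    rw [Fintype.sum_prod_type]
    rw [Finset.sum_comm]
    have hone : ∀ s : Fin m → V,
        (∑ x : V, if (Fin.insertNthEquiv (fun _ => V) j (x, s)) j = v
          then F (Fin.insertNthEquiv (fun _ => V) j (x, s)) else 0) = F (Fin.cons v s) := by
      intro s
      have hsame : ∀ x : V, (Fin.insertNthEquiv (fun _ => V) j (x, s)) j = x := by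
        intro x
        simp [Fin.insertNthEquiv, Fin.insertNth_apply_same]
      have : ∀ x : V, (if (Fin.insertNthEquiv (fun _ => V) j (x, s)) j = v
          then F (Fin.insertNthEquiv (fun _ => V) j (x, s)) else 0)
          = (if x = v then F (j.insertNth x s) else 0) := by
        intro x
        rw [if_congr (by rw [hsame x]) rfl rfl]
        rfl
      rw [Finset.sum_congr rfl fun x _ => this x]
      have hred : ∀ x : V, (if x = v then F (j.insertNth x s) else 0)
          = (if x = v then F (j.insertNth v s) else 0) := by
        intro x
        by_cases hx : x = v
        · rw [hx]
        · rw [if_neg hx, if_neg hx]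
      rw [Finset.sum_congr rfl fun x _ => hred x,
        Finset.sum_ite_eq' Finset.univ v (fun _ => F (j.insertNth v s)),
        if_pos (Finset.mem_univ v), key j s]
    exact Finset.sum_congr rfl fun s _ => hone s
  calc ∑ t : Fin (m + 1) → V, F t
      = ∑ t : Fin (m + 1) → V, ∑ j : Fin (m + 1), if t j = v then F t else 0 :=
        Finset.sum_congr rfl fun t _ => step1 t
    _ = ∑ j : Fin (m + 1), ∑ t : Fin (m + 1) → V, if t j = v then F t else 0 :=
        Finset.sum_comm
    _ = ∑ j : Fin (m + 1), ∑ s : Fin m → V, F (Fin.cons v s) :=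
        Finset.sum_congr rfl fun j _ => step3 j
    _ = (m + 1 : ℝ) * ∑ s : Fin m → V, F (Fin.cons v s) := by
        rw [Finset.sum_const]
        simp [nsmul_eq_mul]
end Aux2
section Aux3
variable [DecidableEq V] [Fintype V] {K : Finset (Finset V)}

lemma cons_comp_succ_sA {m : ℕ} (x : V) (s : Fin (m + 1) → V) (j : Fin (m + 1)) :
    (Fin.cons x s) ∘ (j.succ).succAbove = Fin.cons x (s ∘ j.succAbove) := by
  funext k
  rcases Fin.eq_zero_or_eq_succ k with rfl | ⟨k', rfl⟩
  · simp [Fin.succ_succAbove_zero]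
  · simp [Fin.succ_succAbove_succ]

lemma allowed_comp_inj (hcplx : IsComplex K) {m m' : ℕ} (hm : 0 < m')
    (u : Fin m → V) (e : Fin m' → Fin m) (he : Function.Injective e)
    (hA : Allowed K u) : Allowed K (u ∘ e) := by
  refine ⟨hA.1.comp he, ?_⟩
  have hsub : Finset.image (u ∘ e) Finset.univ ⊆ Finset.image u Finset.univ := by
    intro a ha
    obtain ⟨k, _, hk⟩ := Finset.mem_image.1 ha
    exact Finset.mem_image.2 ⟨e k, Finset.mem_univ _, hk⟩
  have hne : (Finset.image (u ∘ e) Finset.univ).Nonempty :=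
    ⟨u (e ⟨0, hm⟩), Finset.mem_image_of_mem _ (Finset.mem_univ _)⟩
  exact hcplx.2 _ hA.2 _ hsub hne

lemma rho_cons_v {m : ℕ} (v : V) (h : (Fin (m + 1) → V) → ℝ) (s : Fin m → V) :
    rho v h (Fin.cons v s) = h (Fin.cons v s) := by
  unfold rho
  refine if_pos ⟨0, ?_⟩
  simp

lemma allowed_cons_cons_iff (hcplx : IsComplex K) (v x : V) {m : ℕ}
    (s : Fin (m + 1) → V) :
    Allowed K (Fin.cons x (Fin.cons v s)) ↔ Allowed (linkK K v) (Fin.cons x s) := by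
  rw [cons_cons_swap x v s, allowed_comp_perm, allowed_cons_link hcplx v]

variable {i' : ℕ} (v : V) (f : (Fin (i' + 2) → V) → ℝ)

lemma f_swap12 (hf : IsCochain K (i' + 2) f) (a b : V) (r : Fin i' → V) :
    f (Fin.cons a (Fin.cons b r)) = -f (Fin.cons b (Fin.cons a r)) := by
  rw [cons_cons_swap a b r, hf.1 (Equiv.swap 0 1)]
  have h01 : (0 : Fin (i' + 2)) ≠ 1 := by
    intro h
    have := congrArg Fin.val h
    simp at this
  rw [Equiv.Perm.sign_swap h01]
  simp

lemma cobound_eq (hcplx : IsComplex K) (hf : IsCochain K (i' + 2) f)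
    (x : V) (s : Fin (i' + 1) → V)
    (hA : Allowed K (Fin.cons x (Fin.cons v s))) :
    cobound K (rho v f) (Fin.cons x (Fin.cons v s))
      = cobound (linkK K v) (tau K v f) (Fin.cons x s) := by
  have hA2 : Allowed (linkK K v) (Fin.cons x s) := (allowed_cons_cons_iff hcplx v x s).1 hA
  have hconsvs : Fin.cons v s = Fin.cons x (Fin.cons v s) ∘ Fin.succ := by
    funext k; simp
  have hAvs : Allowed K (Fin.cons v s) := by
    rw [hconsvs]
    exact allowed_comp_inj hcplx (Nat.succ_pos _) _ _ (Fin.succ_injective _) hA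
  have hs : Allowed (linkK K v) s := (allowed_cons_link hcplx v s).1 hAvs
  unfold cobound
  rw [if_pos hA, if_pos hA2]
  have hnev : ¬ ∃ j, (Fin.cons x s : Fin (i' + 2) → V) j = v := by
    rintro ⟨j, hj⟩
    rcases Fin.eq_zero_or_eq_succ j with rfl | ⟨j', rfl⟩
    · rw [Fin.cons_zero] at hj
      have h01 : (Fin.cons x (Fin.cons v s) : Fin (i' + 3) → V) 0
          = (Fin.cons x (Fin.cons v s) : Fin (i' + 3) → V) ((0 : Fin (i' + 2)).succ) := by
        simp [hj]
      exact Fin.succ_ne_zero (0 : Fin (i' + 2)) (hA.1 h01).symm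
    · rw [Fin.cons_succ] at hj
      have heq : (Fin.cons x (Fin.cons v s) : Fin (i' + 3) → V) (j'.succ.succ)
          = (Fin.cons x (Fin.cons v s) : Fin (i' + 3) → V) ((0 : Fin (i' + 2)).succ) := by
        simp [hj]
      have h2 := hA.1 heq
      exact Fin.succ_ne_zero j' (Fin.succ_injective _ h2)
  have hL : (∑ j : Fin (i' + 2 + 1), (-1 : ℝ) ^ (j : ℕ) *
        rho v f (Fin.cons x (Fin.cons v s) ∘ j.succAbove))
      = f (Fin.cons v s) + ∑ k : Fin (i' + 1), (-1 : ℝ) ^ ((k : ℕ) + 2) *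
          f (Fin.cons x (Fin.cons v (s ∘ k.succAbove))) := by
    rw [Fin.sum_univ_succ, Fin.sum_univ_succ]
    have e0 : Fin.cons x (Fin.cons v s) ∘ (0 : Fin (i' + 3)).succAbove = Fin.cons v s := by
      funext k; simp [Fin.zero_succAbove]
    have e1 : Fin.cons x (Fin.cons v s) ∘ ((0 : Fin (i' + 2)).succ).succAbove
        = Fin.cons x s := by
      rw [cons_comp_succ_sA]
      congr 1
    have e2 : ∀ k : Fin (i' + 1), Fin.cons x (Fin.cons v s) ∘ (k.succ.succ).succAbove
        = Fin.cons x (Fin.cons v (s ∘ k.succAbove)) := by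
      intro k; rw [cons_comp_succ_sA, cons_comp_succ_sA]
    rw [e0, e1]
    have hrv : rho v f (Fin.cons v s) = f (Fin.cons v s) := rho_cons_v v f s
    have hrx : rho v f (Fin.cons x s) = 0 := by
      unfold rho; exact if_neg hnev
    rw [hrv, hrx]
    have hsum : ∀ k : Fin (i' + 1), (-1 : ℝ) ^ ((k.succ.succ : Fin (i' + 3)) : ℕ) *
          rho v f (Fin.cons x (Fin.cons v s) ∘ (k.succ.succ).succAbove)
        = (-1 : ℝ) ^ ((k : ℕ) + 2) * f (Fin.cons x (Fin.cons v (s ∘ k.succAbove))) := by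
      intro k
      rw [e2 k]
      have hrr : rho v f (Fin.cons x (Fin.cons v (s ∘ k.succAbove)))
          = f (Fin.cons x (Fin.cons v (s ∘ k.succAbove))) := by
        unfold rho
        refine if_pos ⟨(0 : Fin (i' + 1)).succ, ?_⟩
        simp
      rw [hrr]
      congr 1
    rw [Finset.sum_congr rfl fun k _ => hsum k]
    simp
  have hR : (∑ j : Fin (i' + 1 + 1), (-1 : ℝ) ^ (j : ℕ) *
        tau K v f (Fin.cons x s ∘ j.succAbove))
      = f (Fin.cons v s) + ∑ k : Fin (i' + 1), (-1 : ℝ) ^ ((k : ℕ) + 1) *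
          (if Allowed (linkK K v) (Fin.cons x (s ∘ k.succAbove))
            then f (Fin.cons v (Fin.cons x (s ∘ k.succAbove))) else 0) := by
    rw [Fin.sum_univ_succ]
    have e0 : Fin.cons x s ∘ (0 : Fin (i' + 2)).succAbove = s := by
      funext k; simp [Fin.zero_succAbove]
    rw [e0]
    have ht0 : tau K v f s = f (Fin.cons v s) := by
      unfold tau; exact if_pos hs
    rw [ht0]
    have hsum : ∀ k : Fin (i' + 1), (-1 : ℝ) ^ ((k.succ : Fin (i' + 2)) : ℕ) *
          tau K v f (Fin.cons x s ∘ (k.succ).succAbove)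
        = (-1 : ℝ) ^ ((k : ℕ) + 1) *
          (if Allowed (linkK K v) (Fin.cons x (s ∘ k.succAbove))
            then f (Fin.cons v (Fin.cons x (s ∘ k.succAbove))) else 0) := by
      intro k
      rw [cons_comp_succ_sA]
      unfold tau
      congr 1
    rw [Finset.sum_congr rfl fun k _ => hsum k]
    simp
  rw [hL, hR]
  congr 1
  refine Finset.sum_congr rfl fun k _ => ?_
  by_cases hAr : Allowed (linkK K v) (Fin.cons x (s ∘ k.succAbove))
  · rw [if_pos hAr, f_swap12 f hf x v (s ∘ k.succAbove)]
    ring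
  · rw [if_neg hAr]
    have hz : f (Fin.cons v (Fin.cons x (s ∘ k.succAbove))) = 0 :=
      hf.2 _ (fun hc => hAr ((allowed_cons_link hcplx v _).1 hc))
    have hz2 : f (Fin.cons x (Fin.cons v (s ∘ k.succAbove))) = 0 := by
      rw [f_swap12 f hf x v (s ∘ k.succAbove), hz, neg_zero]
    rw [hz2]
    ring

end Aux3
section Aux4
variable [DecidableEq V] [Fintype V] {K : Finset (Finset V)}
variable {i' n' : ℕ} (v : V) (f : (Fin (i' + 2) → V) → ℝ)

lemma lap_cons_eq (hcplx : IsComplex K) (hf : IsCochain K (i' + 2) f)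
    (s : Fin (i' + 1) → V) (hs : Allowed (linkK K v) s) :
    lap K (n' + 1) (rho v f) (Fin.cons v s) = lap (linkK K v) n' (tau K v f) s := by
  unfold lap codiff
  refine Finset.sum_congr rfl fun x _ => ?_
  by_cases hA : Allowed K (Fin.cons x (Fin.cons v s))
  · have hA2 : Allowed (linkK K v) (Fin.cons x s) := (allowed_cons_cons_iff hcplx v x s).1 hA
    rw [if_pos hA, if_pos hA2, cobound_eq v f hcplx hf x s hA]
    congr 2
    · -- numerator weights
      have h1 : Finset.image (Fin.cons x (Fin.cons v s)) Finset.univ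
          = insert v (Finset.image (Fin.cons x s) Finset.univ) := by
        rw [image_cons, image_cons, image_cons, Finset.insert_comm]
      rw [h1, wt_link hcplx v hA2.2]
    · -- denominator weights
      have h2 : Finset.image (Fin.cons v s) Finset.univ
          = insert v (Finset.image s Finset.univ) := image_cons v s
      rw [h2, wt_link hcplx v hs.2]
  · have hA2 : ¬ Allowed (linkK K v) (Fin.cons x s) :=
      fun hc => hA ((allowed_cons_cons_iff hcplx v x s).2 hc)
    rw [if_neg hA, if_neg hA2]

lemma point_A (hcplx : IsComplex K) (hf : IsCochain K (i' + 2) f) (s : Fin (i' + 1) → V) :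
    (wt K (n' + 1) (Finset.image (Fin.cons v s) Finset.univ) : ℝ) *
        lap K (n' + 1) (rho v f) (Fin.cons v s) * rho v f (Fin.cons v s)
      = (wt (linkK K v) n' (Finset.image s Finset.univ) : ℝ) *
        lap (linkK K v) n' (tau K v f) s * tau K v f s := by
  by_cases hs : Allowed (linkK K v) s
  · rw [rho_cons_v, lap_cons_eq v f hcplx hf s hs]
    have ht : tau K v f s = f (Fin.cons v s) := by unfold tau; rw [if_pos hs]
    rw [ht, image_cons, wt_link hcplx v hs.2]
  · have ht : tau K v f s = 0 := by unfold tau; rw [if_neg hs]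
    have hz : f (Fin.cons v s) = 0 :=
      hf.2 _ (fun hc => hs ((allowed_cons_link hcplx v s).1 hc))
    rw [ht, rho_cons_v, hz]
    ring

lemma point_B (hcplx : IsComplex K) (hf : IsCochain K (i' + 2) f) (s : Fin (i' + 1) → V) :
    (wt K (n' + 1) (Finset.image (Fin.cons v s) Finset.univ) : ℝ) *
        rho v f (Fin.cons v s) * f (Fin.cons v s)
      = (wt (linkK K v) n' (Finset.image s Finset.univ) : ℝ) *
        tau K v f s * tau K v f s := by
  by_cases hs : Allowed (linkK K v) s
  · have ht : tau K v f s = f (Fin.cons v s) := by unfold tau; rw [if_pos hs]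
    rw [rho_cons_v, ht, image_cons, wt_link hcplx v hs.2]
  · have ht : tau K v f s = 0 := by unfold tau; rw [if_neg hs]
    have hz : f (Fin.cons v s) = 0 :=
      hf.2 _ (fun hc => hs ((allowed_cons_link hcplx v s).1 hc))
    rw [ht, rho_cons_v, hz]
    ring

lemma tau_cochain (hf : IsCochain K (i' + 2) f) :
    IsCochain (linkK K v) (i' + 1) (tau K v f) := by
  constructor
  · intro σ s
    unfold tau
    have hc : Fin.cons v (s ∘ ⇑σ) = Fin.cons v s ∘ ⇑(Equiv.Perm.decomposeFin.symm (0, σ)) :=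
      (cons_comp_ext v s σ).symm
    rw [if_congr (allowed_comp_perm σ s) rfl rfl]
    split_ifs with hA
    · rw [hc, hf.1 (Equiv.Perm.decomposeFin.symm (0, σ)), sign_decompose_zero]
    · rw [mul_zero]
  · intro s hs
    unfold tau
    rw [if_neg hs]

end Aux4

/-- if `λ` bounds all the local Rayleigh quotients, i.e.
`(Δ_u g, g)_u ≤ λ·(g,g)_u` for every vertex `u` of `X` and `g ∈ C^{i-1}(Lk(u))`,
then `(Δρ_v f, ρ_v f) ≤ λ·(ρ_v f, f)` for every `f ∈ C^i(X)` and vertex `v` of `X`. -/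
theorem local_rayleigh_bound
    [Fintype V] [DecidableEq V] (K : Finset (Finset V)) (n i : ℕ)
    (hcplx : IsComplex K) (hpure : IsPureDim K n) (hi1 : 1 ≤ i) (hin : i + 1 ≤ n)
    (lam : ℝ)
    (hlam : ∀ u ∈ verts K, ∀ g : (Fin i → V) → ℝ, IsCochain (linkK K u) i g →
      innerC (linkK K u) (n - 1) i (lap (linkK K u) (n - 1) g) g
        ≤ lam * innerC (linkK K u) (n - 1) i g g)
    (f : (Fin (i + 1) → V) → ℝ) (hf : IsCochain K (i + 1) f)
    (v : V) (hv : v ∈ verts K) :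
    innerC K n (i + 1) (lap K n (rho v f)) (rho v f)
      ≤ lam * innerC K n (i + 1) (rho v f) f := by
  obtain ⟨i', rfl⟩ : ∃ i', i = i' + 1 := ⟨i - 1, by omega⟩
  obtain ⟨n', rfl⟩ : ∃ n', n = n' + 1 := ⟨n - 1, by omega⟩
  simp only [Nat.add_sub_cancel] at hlam
  have hf' : IsCochain K (i' + 2) f := hf
  have hrho_alt : ∀ (σ : Equiv.Perm (Fin (i' + 2))) (t : Fin (i' + 2) → V),
      rho v f (t ∘ ⇑σ) = ((Equiv.Perm.sign σ : ℤ) : ℝ) * rho v f t := rho_alt v f hf'.1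
  have hrho_inj : ∀ t : Fin (i' + 2) → V, ¬ Function.Injective t → rho v f t = 0 := by
    intro t ht
    have hz : f t = 0 := hf'.2 t (fun hA => ht hA.1)
    unfold rho
    rw [hz]
    simp
  have hrho_nov : ∀ t : Fin (i' + 2) → V, ¬ (∃ j, t j = v) → rho v f t = 0 := by
    intro t ht
    unfold rho
    rw [if_neg ht]
  have hsq : ∀ σ : Equiv.Perm (Fin (i' + 2)),
      ((Equiv.Perm.sign σ : ℤ) : ℝ) * ((Equiv.Perm.sign σ : ℤ) : ℝ) = 1 := by
    intro σ
    rcases Int.units_eq_one_or (Equiv.Perm.sign σ) with h | h <;> simp [h]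
  have haux : ∀ (w l r e : ℝ), e * e = 1 → w * (e * l) * (e * r) = w * l * r := by
    intro w l r e he
    calc w * (e * l) * (e * r) = (e * e) * (w * l * r) := by ring
      _ = w * l * r := by rw [he]; ring
  have hfac : ((i' + 1 + 1 : ℕ) : ℝ) ≠ 0 := by positivity
  have hL : innerC K (n' + 1) (i' + 1 + 1) (lap K (n' + 1) (rho v f)) (rho v f)
      = innerC (linkK K v) n' (i' + 1) (lap (linkK K v) n' (tau K v f)) (tau K v f) := by
    unfold innerC
    rw [count_sum v (fun t => (wt K (n' + 1) (Finset.image t Finset.univ) : ℝ) *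
        lap K (n' + 1) (rho v f) t * rho v f t)
      (fun t ht => by rw [hrho_nov t ht, mul_zero])
      (fun t ht => by rw [hrho_inj t ht, mul_zero])
      (fun σ t => by
        rw [image_comp_perm, lap_alt (rho v f) hrho_alt σ t, hrho_alt σ t]
        exact haux _ _ _ _ (hsq σ))]
    rw [Finset.sum_congr rfl fun s _ => point_A v f hcplx hf' s]
    rw [Nat.factorial_succ (i' + 1)]
    rw [mul_comm (i' + 1 + 1) (Nat.factorial (i' + 1))]
    push_cast
    have hfa : ((i' + 1).factorial : ℝ) ≠ 0 := by positivity
    have hia : ((i' : ℝ) + 1 + 1) ≠ 0 := by positivity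
    field_simp
  have hR : innerC K (n' + 1) (i' + 1 + 1) (rho v f) f
      = innerC (linkK K v) n' (i' + 1) (tau K v f) (tau K v f) := by
    unfold innerC
    rw [count_sum v (fun t => (wt K (n' + 1) (Finset.image t Finset.univ) : ℝ) *
        rho v f t * f t)
      (fun t ht => by rw [hrho_nov t ht, mul_zero, zero_mul])
      (fun t ht => by rw [hf'.2 t (fun hA => ht hA.1), mul_zero])
      (fun σ t => by
        rw [image_comp_perm, hrho_alt σ t, hf'.1 σ t]
        exact haux _ _ _ _ (hsq σ))]
    rw [Finset.sum_congr rfl fun s _ => point_B v f hcplx hf' s]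
    rw [Nat.factorial_succ (i' + 1)]
    rw [mul_comm (i' + 1 + 1) (Nat.factorial (i' + 1))]
    push_cast
    have hfa : ((i' + 1).factorial : ℝ) ≠ 0 := by positivity
    have hia : ((i' : ℝ) + 1 + 1) ≠ 0 := by positivity
    field_simp
  rw [hL, hR]
  exact hlam v hv (tau K v f) (tau_cochain v f hf')
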